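/- Let q be a prime power and let S ⊆ F_{q^3} be an F_q-subspace of dimension 2. Then S² = F_{q^3}. Moreover, for any F_q-basis (γ_0, γ_1) of S, the triple (γ_0², γ_0γ_1, γ_1²) is an F_q-basis of F_{q^3}. -/

import Mathlib

open Module

/-- The square `S²` of a subspace `S ⊆ F`: the `K`-span of all products of two
elements of `S`. -/
def sqSubspace {K F : Type*} [Field K] [Field F] [Algebra K F] (S : Submodule K F) :
    Submodule K F :=
  Submodule.span K {x | ∃ a ∈ S, ∃ b ∈ S, x = a * b}

lemma quad_aux {K F : Type*} [Field K] [Field F] [Algebra K F]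
    [FiniteDimensional K F] (h3 : finrank K F = 3) (t : F)
    (ht : t ∉ (algebraMap K F).range) (a b c : K)
    (h : a • t ^ 2 + b • t + algebraMap K F c = 0) : a = 0 ∧ b = 0 ∧ c = 0 := by
  have hint : IsIntegral K t := IsIntegral.of_finite K t
  have hdvd : (minpoly K t).natDegree ∣ finrank K F := minpoly.degree_dvd hint
  have h2 : 2 ≤ (minpoly K t).natDegree := (minpoly.two_le_natDegree_iff hint).mpr ht
  have hdeg : (minpoly K t).natDegree = 3 := by
    rw [h3] at hdvd
    rcases (Nat.prime_three).eq_one_or_self_of_dvd _ hdvd with h | h <;> omega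
  set p : Polynomial K := Polynomial.C a * Polynomial.X ^ 2 + Polynomial.C b * Polynomial.X +
    Polynomial.C c with hp
  have haev : Polynomial.aeval t p = 0 := by
    rw [hp]
    simp only [map_add, map_mul, map_pow, Polynomial.aeval_X, Polynomial.aeval_C]
    rw [← Algebra.smul_def, ← Algebra.smul_def]
    exact h
  have hp0 : p = 0 := by
    by_contra hne
    have hle : (minpoly K t).natDegree ≤ p.natDegree :=
      Polynomial.natDegree_le_of_dvd (minpoly.dvd K t haev) hne
    have : p.natDegree ≤ 2 := by
      apply Polynomial.natDegree_le_iff_coeff_eq_zero.mpr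
      intro n hn
      have hne : n ≠ 2 ∧ n ≠ 1 ∧ n ≠ 0 := by omega
      simp [hp, Polynomial.coeff_X_pow, Polynomial.coeff_X, Polynomial.coeff_C,
        hne.1, hne.2.1, hne.2.2, Ne.symm hne.2.1]
    omega
  have ha : a = 0 := by
    have := congrArg (fun q => Polynomial.coeff q 2) hp0
    simpa [hp, Polynomial.coeff_X_pow] using this
  have hb : b = 0 := by
    have := congrArg (fun q => Polynomial.coeff q 1) hp0
    simpa [hp, Polynomial.coeff_X_pow] using this
  have hc : c = 0 := by
    have := congrArg (fun q => Polynomial.coeff q 0) hp0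
    simpa [hp, Polynomial.coeff_X_pow] using this
  exact ⟨ha, hb, hc⟩

lemma li_sq {K F : Type*} [Field K] [Field F] [Algebra K F]
    [FiniteDimensional K F] (h3 : finrank K F = 3) (γ0 γ1 : F)
    (hli : LinearIndependent K ![γ0, γ1]) :
    LinearIndependent K ![γ0 ^ 2, γ0 * γ1, γ1 ^ 2] := by
  obtain ⟨h1, h2⟩ := linearIndependent_fin2.mp hli
  simp only [Matrix.cons_val_one, Matrix.head_cons, Matrix.cons_val_zero] at h1 h2
  have hγ1 : γ1 ≠ 0 := h1
  set t : F := γ0 / γ1 with htdef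
  have ht : t ∉ (algebraMap K F).range := by
    rintro ⟨k, hk⟩
    apply h2 k
    rw [Algebra.smul_def, hk, htdef, div_mul_cancel₀ _ hγ1]
  rw [Fintype.linearIndependent_iff]
  intro g hg
  have hsum : g 0 • γ0 ^ 2 + g 1 • (γ0 * γ1) + g 2 • γ1 ^ 2 = 0 := by
    rw [Fin.sum_univ_three] at hg
    simpa using hg
  have hdiv : g 0 • t ^ 2 + g 1 • t + algebraMap K F (g 2) = 0 := by
    have := congrArg (fun x => x / γ1 ^ 2) hsum
    simp only [zero_div] at this
    rw [← this]
    field_simp [htdef, Algebra.smul_def]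
    simp only [htdef, Algebra.smul_def]
    field_simp
  obtain ⟨ha, hb, hc⟩ := quad_aux h3 t ht _ _ _ hdiv
  intro i
  fin_cases i <;> assumption

theorem stmt_13 {K F : Type*} [Field K] [Fintype K] [Field F] [Algebra K F]
    [FiniteDimensional K F] (h3 : finrank K F = 3)
    (S : Submodule K F) (hS : finrank K S = 2) :
    sqSubspace S = ⊤ ∧
      ∀ γ0 γ1 : F, γ0 ∈ S → γ1 ∈ S → LinearIndependent K ![γ0, γ1] →
        LinearIndependent K ![γ0 ^ 2, γ0 * γ1, γ1 ^ 2] ∧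
          Submodule.span K {γ0 ^ 2, γ0 * γ1, γ1 ^ 2} = (⊤ : Submodule K F) := by
  have main : ∀ γ0 γ1 : F, γ0 ∈ S → γ1 ∈ S → LinearIndependent K ![γ0, γ1] →
      LinearIndependent K ![γ0 ^ 2, γ0 * γ1, γ1 ^ 2] ∧
        Submodule.span K {γ0 ^ 2, γ0 * γ1, γ1 ^ 2} = (⊤ : Submodule K F) := by
    intro γ0 γ1 _ _ hli
    have hli2 := li_sq h3 γ0 γ1 hli
    refine ⟨hli2, ?_⟩
    have := hli2.span_eq_top_of_card_eq_finrank (by simp [h3])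
    rw [← this]
    congr 1
    simp [Set.range_comp]
    ext x
    simp [Fin.exists_fin_succ, Matrix.cons_val_zero, Matrix.cons_val_one]
    aesop
  refine ⟨?_, main⟩
  -- build a basis of S
  obtain b := finBasisOfFinrankEq K S hS
  set γ0 : F := (b 0 : F) with hγ0
  set γ1 : F := (b 1 : F) with hγ1
  have hli : LinearIndependent K ![γ0, γ1] := by
    have h := b.linearIndependent.map' S.subtype (Submodule.ker_subtype S)
    have : (S.subtype ∘ b) = ![γ0, γ1] := by
      funext i
      fin_cases i <;> rfl
    rwa [← this]
  obtain ⟨-, hspan⟩ := main γ0 γ1 (b 0).2 (b 1).2 hli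
  rw [eq_top_iff, ← hspan]
  apply Submodule.span_le.mpr
  intro x hx
  apply Submodule.subset_span
  simp only [Set.mem_insert_iff, Set.mem_singleton_iff] at hx
  rcases hx with rfl | rfl | rfl
  · exact ⟨γ0, (b 0).2, γ0, (b 0).2, (sq γ0)⟩
  · exact ⟨γ0, (b 0).2, γ1, (b 1).2, rfl⟩
  · exact ⟨γ1, (b 1).2, γ1, (b 1).2, (sq γ1)⟩
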